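/- Let X be a real normed space, E : X → ℝ continuous, S the unit sphere of X, and suppose for each u ∈ S the function φ_u(t) = E(tu) on (0,1] is C¹ and satisfies: φ_u(t) < 0 for all sufficiently small t > 0, and whenever φ_u(t) ≥ 0 one has φ_u'(t) > 0. Then for each u ∈ S there exists a unique T(u) ∈ (0,1] such that φ_u(t) < 0 for 0 < t < T(u) and φ_u(t) > 0 for T(u) < t ≤ 1. -/

import Mathlib

open Set

/-- Fibering-map uniqueness: for each `u` on the unit sphere there is a unique
`T(u) ∈ (0,1]` such that `E(tu) < 0` for `0 < t < T(u)` and `E(tu) > 0` for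
`T(u) < t ≤ 1`. -/
theorem stmt2 {X : Type*} [NormedAddCommGroup X] [NormedSpace ℝ X]
    (E : X → ℝ) (hE : Continuous E)
    (φ' : X → ℝ → ℝ)
    (hC1 : ∀ u, ‖u‖ = 1 → (∀ t ∈ Ioc (0 : ℝ) 1, HasDerivAt (fun s : ℝ => E (s • u)) (φ' u t) t)
      ∧ ContinuousOn (φ' u) (Ioc (0 : ℝ) 1))
    (hsmall : ∀ u, ‖u‖ = 1 → ∃ ε > 0, ∀ t : ℝ, 0 < t → t < ε → E (t • u) < 0)
    (hpos : ∀ u, ‖u‖ = 1 → ∀ t ∈ Ioc (0 : ℝ) 1, 0 ≤ E (t • u) → 0 < φ' u t) :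
    ∀ u, ‖u‖ = 1 → ∃! T : ℝ, T ∈ Ioc (0 : ℝ) 1 ∧
      (∀ t : ℝ, 0 < t → t < T → E (t • u) < 0) ∧
      (∀ t : ℝ, T < t → t ≤ 1 → 0 < E (t • u)) := by
  intro u hu
  set φ : ℝ → ℝ := fun s : ℝ => E (s • u) with hφdef
  have hφc : Continuous φ := hE.comp (continuous_id.smul continuous_const)
  obtain ⟨hD, _⟩ := hC1 u hu
  have hpos' : ∀ t ∈ Ioc (0:ℝ) 1, 0 ≤ φ t → 0 < φ' u t := hpos u hu
  have hclosed_le : IsClosed {t : ℝ | φ t ≤ 0} := isClosed_le hφc continuous_const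
  have hclosed_ge : IsClosed {t : ℝ | 0 ≤ φ t} := isClosed_le continuous_const hφc
  -- Lemma A: forward positivity
  have lemA : ∀ t0 ∈ Ioc (0:ℝ) 1, 0 ≤ φ t0 → ∀ t1, t0 < t1 → t1 ≤ 1 → 0 < φ t1 := by
    intro t0 ht0 hφ0 t1 ht01 ht11
    have step1 : ∀ s ∈ Icc t0 t1, 0 ≤ φ s := by
      by_contra h
      push_neg at h
      obtain ⟨s0, hs0, hs0neg⟩ := h
      set N : Set ℝ := {t | t ∈ Icc t0 t1 ∧ φ t < 0} with hN
      have hNne : N.Nonempty := ⟨s0, hs0, hs0neg⟩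
      have hNbdd : BddBelow N := ⟨t0, fun x hx => hx.1.1⟩
      set c := sInf N with hc
      have hct0 : t0 ≤ c := le_csInf hNne fun x hx => hx.1.1
      have hct1 : c ≤ t1 := le_trans (csInf_le hNbdd ⟨hs0, hs0neg⟩) hs0.2
      have hcmem : c ∈ Ioc (0:ℝ) 1 := ⟨lt_of_lt_of_le ht0.1 hct0, le_trans hct1 ht11⟩
      have hφcle : φ c ≤ 0 := by
        have h1 : c ∈ closure N := csInf_mem_closure hNne hNbdd
        exact closure_minimal (fun x hx => le_of_lt hx.2) hclosed_le h1
      have hφcge : 0 ≤ φ c := by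
        rcases eq_or_lt_of_le hct0 with heq | hlt
        · rw [← heq]; exact hφ0
        · have hsub : Ico t0 c ⊆ {t : ℝ | 0 ≤ φ t} := by
            intro x hx
            by_contra hxneg
            simp only [Set.mem_setOf_eq] at hxneg
            have hxN : x ∈ N := ⟨⟨hx.1, le_trans (le_of_lt hx.2) hct1⟩, not_le.mp hxneg⟩
            exact absurd (csInf_le hNbdd hxN) (not_le.mpr hx.2)
          have hcc : c ∈ closure (Ico t0 c) := by
            rw [closure_Ico (ne_of_lt hlt)]
            exact ⟨le_of_lt hlt, le_refl c⟩
          exact closure_minimal hsub hclosed_ge hcc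
      have hφc0 : φ c = 0 := le_antisymm hφcle hφcge
      have hd : HasDerivAt φ (φ' u c) c := hD c hcmem
      have hdp : 0 < φ' u c := hpos' c hcmem hφcge
      -- eventually to the right of c, φ > 0
      have hslope : Filter.Tendsto (slope φ c) (nhdsWithin c {c}ᶜ) (nhds (φ' u c)) :=
        hasDerivAt_iff_tendsto_slope.mp hd
      have hev : ∀ᶠ s in nhdsWithin c {c}ᶜ, 0 < slope φ c s :=
        hslope.eventually (eventually_gt_nhds hdp)
      have hev' : ∀ᶠ s in nhdsWithin c (Ioi c), 0 < slope φ c s :=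
        hev.filter_mono (nhdsWithin_mono c fun x hx => ne_of_gt hx)
      obtain ⟨δ, hδ, hδsub⟩ := (nhdsGT_basis c).eventually_iff.mp hev'
      -- find element of N in (c, δ)
      have hlt : sInf N < δ := lt_of_le_of_lt (le_refl _) (by rw [← hc]; exact hδ)
      obtain ⟨n, hnN, hnlt⟩ := exists_lt_of_csInf_lt hNne (hc ▸ hδ)
      have hcn : c ≤ n := csInf_le hNbdd hnN
      have hcn' : c < n := lt_of_le_of_ne hcn (by
        intro heq; rw [← heq] at hnN; exact absurd hφc0 (ne_of_lt hnN.2))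
      have hslopepos : 0 < slope φ c n := hδsub ⟨hcn', hnlt⟩
      have : 0 < φ n := by
        have := mul_pos (sub_pos.mpr hcn') hslopepos
        rw [slope_def_field] at this
        have h2 : (φ n - φ c) / (n - c) * (n - c) = φ n - φ c :=
          div_mul_cancel₀ _ (sub_ne_zero.mpr (ne_of_gt hcn'))
        rw [mul_comm, h2, hφc0, sub_zero] at this
        exact this
      exact absurd this (not_lt.mpr (le_of_lt hnN.2))
    -- step 2: strict monotonicity on [t0, t1]
    have hmono : StrictMonoOn φ (Icc t0 t1) := by
      apply strictMonoOn_of_deriv_pos (convex_Icc t0 t1) hφc.continuousOn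
      intro x hx
      rw [interior_Icc] at hx
      have hxmem : x ∈ Ioc (0:ℝ) 1 :=
        ⟨lt_trans ht0.1 hx.1, le_trans (le_of_lt hx.2) ht11⟩
      rw [(hD x hxmem).deriv]
      exact hpos' x hxmem (step1 x ⟨le_of_lt hx.1, le_of_lt hx.2⟩)
    have : φ t0 < φ t1 :=
      hmono ⟨le_refl t0, le_of_lt ht01⟩ ⟨le_of_lt ht01, le_refl t1⟩ ht01
    linarith
  -- Main argument
  obtain ⟨ε, hε, hsm⟩ := hsmall u hu
  set Z : Set ℝ := {t | t ∈ Ioc (0:ℝ) 1 ∧ 0 ≤ φ t} with hZ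
  by_cases hZne : Z.Nonempty
  · -- T = sInf Z
    set T := sInf Z with hT
    have hZbdd : BddBelow Z := ⟨0, fun x hx => le_of_lt hx.1.1⟩
    have hεZ : ∀ z ∈ Z, ε ≤ z := by
      intro z hz
      by_contra hlt
      push_neg at hlt
      exact absurd hz.2 (not_le.mpr (hsm z hz.1.1 hlt))
    have hTε : ε ≤ T := le_csInf hZne hεZ
    have hT0 : 0 < T := lt_of_lt_of_le hε hTε
    obtain ⟨z0, hz0⟩ := id hZne
    have hT1 : T ≤ 1 := le_trans (csInf_le hZbdd hz0) hz0.1.2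
    have hTmem : T ∈ Ioc (0:ℝ) 1 := ⟨hT0, hT1⟩
    have hφT : 0 ≤ φ T := by
      have h1 : T ∈ closure Z := csInf_mem_closure hZne hZbdd
      exact closure_minimal (fun x hx => hx.2) hclosed_ge h1
    have hneg : ∀ t : ℝ, 0 < t → t < T → φ t < 0 := by
      intro t ht htT
      by_contra h
      push_neg at h
      have : t ∈ Z := ⟨⟨ht, le_trans (le_of_lt htT) hT1⟩, h⟩
      exact absurd (csInf_le hZbdd this) (not_le.mpr htT)
    have hposT : ∀ t : ℝ, T < t → t ≤ 1 → 0 < φ t := fun t h1 h2 =>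
      lemA T hTmem hφT t h1 h2
    refine ⟨T, ⟨hTmem, hneg, hposT⟩, ?_⟩
    rintro y ⟨hy, hyneg, hypos⟩
    rcases lt_trichotomy y T with h | h | h
    · exfalso
      set m := (y + T) / 2 with hm
      have hym : y < m := by simp [hm]; linarith
      have hmT : m < T := by simp [hm]; linarith
      have h1 : 0 < φ m := hypos m hym (le_trans (le_of_lt hmT) hT1)
      have h2 : φ m < 0 := hneg m (lt_trans hy.1 hym) hmT
      linarith
    · exact h
    · exfalso
      set m := (T + y) / 2 with hm
      have hTm : T < m := by simp [hm]; linarith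
      have hmy : m < y := by simp [hm]; linarith
      have h1 : 0 < φ m := hposT m hTm (le_trans (le_of_lt hmy) hy.2)
      have h2 : φ m < 0 := hyneg m (lt_trans hT0 hTm) hmy
      linarith
  · -- Z empty: T = 1
    have hallneg : ∀ t ∈ Ioc (0:ℝ) 1, φ t < 0 := by
      intro t ht
      by_contra h
      push_neg at h
      exact hZne ⟨t, ht, h⟩
    refine ⟨1, ⟨⟨one_pos, le_refl 1⟩, fun t ht ht1 => hallneg t ⟨ht, le_of_lt ht1⟩,
      fun t h1 h2 => absurd (lt_of_lt_of_le h1 h2) (lt_irrefl 1)⟩, ?_⟩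
    rintro y ⟨hy, hyneg, hypos⟩
    by_contra hne
    have hy1 : y < 1 := lt_of_le_of_ne hy.2 hne
    have : 0 < φ 1 := hypos 1 hy1 (le_refl 1)
    exact absurd this (not_lt.mpr (le_of_lt (hallneg 1 ⟨one_pos, le_refl 1⟩)))
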